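/- Let A have Spark(A) = L+1 and k ≤ L. Then γ(ℓ_p, A, k), as a function of p on [0,1], is left-continuous at every p ∈ (0,1]: lim_{q→p⁻} γ(ℓ_q, A, k) = γ(ℓ_p, A, k). -/

import Mathlib

open Finset MeasureTheory Filter

/-- `phi p x = |x|^p`, with the convention `|x|^0 = 1` for `x ≠ 0` and `phi p 0 = 0`. -/
noncomputable def phi (p x : ℝ) : ℝ := if x = 0 then 0 else |x| ^ p

open Classical in
/-- support of a vector, as a finset -/
noncomputable def supp {n : ℕ} (z : Fin n → ℝ) : Finset (Fin n) :=
  Finset.univ.filter (fun i => z i ≠ 0)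

/-- `Spark(A) = s`: some `s` columns are linearly dependent (a kernel vector with support of
size `s`), and every nonzero kernel vector has support of size at least `s`. -/
def sparkEq {m n : ℕ} (A : Matrix (Fin m) (Fin n) ℝ) (s : ℕ) : Prop :=
  (∃ z, A.mulVec z = 0 ∧ z ≠ 0 ∧ (supp z).card = s) ∧
  (∀ z, A.mulVec z = 0 → z ≠ 0 → s ≤ (supp z).card)

/-- The set of constants `γ` satisfying the null space property inequality at level `k`. -/
def validNSC {m n : ℕ} (A : Matrix (Fin m) (Fin n) ℝ) (p : ℝ) (k : ℕ) : Set ℝ :=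
  {γ | ∀ S : Finset (Fin n), S.card ≤ k → ∀ z, A.mulVec z = 0 →
    ∑ i ∈ S, phi p (z i) ≤ γ * ∑ i ∈ Sᶜ, phi p (z i)}

/-- The null space constant `γ(ℓ_p, A, k)`: the smallest valid constant. -/
noncomputable def gammaNSC {m n : ℕ} (A : Matrix (Fin m) (Fin n) ℝ) (p : ℝ) (k : ℕ) : ℝ :=
  sInf (validNSC A p k)

/-- The ratio `θ(p, z, S)`. -/
noncomputable def theta {n : ℕ} (p : ℝ) (z : Fin n → ℝ) (S : Finset (Fin n)) : ℝ :=
  (∑ i ∈ S, phi p (z i)) / (∑ i ∈ Sᶜ, phi p (z i))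

lemma phi_eq {q : ℝ} (hq : q ≠ 0) (x : ℝ) : phi q x = |x| ^ q := by
  unfold phi; split_ifs with h
  · simp [h, Real.zero_rpow hq]
  · rfl

lemma phi_nonneg (q x : ℝ) : 0 ≤ phi q x := by
  unfold phi; split_ifs
  · exact le_rfl
  · exact Real.rpow_nonneg (abs_nonneg x) q

lemma phi_pos {x : ℝ} (q : ℝ) (hx : x ≠ 0) : 0 < phi q x := by
  unfold phi; rw [if_neg hx]; exact Real.rpow_pos_of_pos (abs_pos.2 hx) q

lemma phi_mono {q : ℝ} (hq : 0 ≤ q) {x y : ℝ} (h : |x| ≤ |y|) : phi q x ≤ phi q y := by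
  rcases eq_or_ne x 0 with hx | hx
  · rw [hx]; simpa [phi] using phi_nonneg q y
  · have hy : y ≠ 0 := by
      intro h0
      rw [h0, abs_zero] at h
      exact hx (abs_eq_zero.1 (le_antisymm h (abs_nonneg x)))
    unfold phi
    rw [if_neg hx, if_neg hy]
    exact Real.rpow_le_rpow (abs_nonneg x) h hq

section main

variable {M N L : ℕ} {A : Matrix (Fin M) (Fin N) ℝ} {k : ℕ}

lemma den_pos (hspark : sparkEq A (L + 1)) (hk : k ≤ L) (q : ℝ) {z : Fin N → ℝ}
    (hz : A.mulVec z = 0) (hz0 : z ≠ 0) {S : Finset (Fin N)} (hS : S.card ≤ k) :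
    0 < ∑ i ∈ Sᶜ, phi q (z i) := by
  have hcard : L + 1 ≤ (supp z).card := hspark.2 z hz hz0
  have hns : ¬ supp z ⊆ S := by
    intro hsub
    have := Finset.card_le_card hsub
    omega
  obtain ⟨i, hi, hiS⟩ := Finset.not_subset.1 hns
  have hzi : z i ≠ 0 := by simpa [supp] using hi
  exact Finset.sum_pos' (fun j _ => phi_nonneg q (z j))
    ⟨i, Finset.mem_compl.2 hiS, phi_pos q hzi⟩

lemma theta_le_of_valid (hspark : sparkEq A (L + 1)) (hk : k ≤ L) {q γ : ℝ}
    (hγ : γ ∈ validNSC A q k) {z : Fin N → ℝ} (hz : A.mulVec z = 0) (hz0 : z ≠ 0)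
    {S : Finset (Fin N)} (hS : S.card ≤ k) : theta q z S ≤ γ := by
  rw [theta, div_le_iff₀ (den_pos hspark hk q hz hz0 hS)]
  exact hγ S hS z hz

lemma theta_smul {q : ℝ} (hq : q ≠ 0) {c : ℝ} (hc : c ≠ 0) (z : Fin N → ℝ)
    (S : Finset (Fin N)) : theta q (c • z) S = theta q z S := by
  have h : ∀ T : Finset (Fin N),
      ∑ i ∈ T, phi q ((c • z) i) = |c| ^ q * ∑ i ∈ T, phi q (z i) := by
    intro T
    rw [Finset.mul_sum]
    refine Finset.sum_congr rfl fun i _ => ?_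
    simp only [Pi.smul_apply, smul_eq_mul, phi_eq hq, abs_mul]
    rw [Real.mul_rpow (abs_nonneg c) (abs_nonneg (z i))]
  have hcq : |c| ^ (q : ℝ) ≠ 0 := (Real.rpow_pos_of_pos (abs_pos.2 hc) q).ne'
  rw [theta, theta, h, h, mul_div_mul_left _ _ hcq]

lemma sum_split (f : Fin N → ℝ) (S T : Finset (Fin N)) :
    ∑ i ∈ S, f i = ∑ i ∈ S \ T, f i + ∑ i ∈ S ∩ T, f i := by
  rw [← Finset.sum_union (Finset.disjoint_sdiff_inter S T), Finset.sdiff_union_inter]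

lemma sum_sdiff_le {q : ℝ} (hq : 0 ≤ q) (z : Fin N → ℝ) {S T : Finset (Fin N)}
    (hcard : S.card ≤ T.card) (hsep : ∀ i ∈ T, ∀ j ∉ T, |z j| ≤ |z i|) :
    ∑ i ∈ S \ T, phi q (z i) ≤ ∑ i ∈ T \ S, phi q (z i) := by
  have hcc : (S \ T).card ≤ (T \ S).card := by
    have h1 := Finset.card_sdiff_add_card_inter S T
    have h2 := Finset.card_sdiff_add_card_inter T S
    rw [Finset.inter_comm T S] at h2
    omega
  rcases (T \ S).eq_empty_or_nonempty with h | h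
  · have : (S \ T) = ∅ := by
      rw [← Finset.card_eq_zero]
      rw [h] at hcc
      simpa using hcc
    simp [h, this]
  · set b := (T \ S).inf' h (fun i => phi q (z i)) with hb
    have hb0 : 0 ≤ b := Finset.le_inf' h _ (fun i _ => phi_nonneg q (z i))
    have hble : ∀ j ∈ S \ T, phi q (z j) ≤ b := by
      intro j hj
      refine Finset.le_inf' h _ (fun i hi => ?_)
      exact phi_mono hq (hsep i (Finset.mem_sdiff.1 hi).1 j (Finset.mem_sdiff.1 hj).2)
    calc ∑ i ∈ S \ T, phi q (z i) ≤ (S \ T).card • b :=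
          Finset.sum_le_card_nsmul _ _ _ hble
      _ ≤ (T \ S).card • b := by
          rw [nsmul_eq_mul, nsmul_eq_mul]
          exact mul_le_mul_of_nonneg_right (Nat.cast_le.2 hcc) hb0
      _ ≤ ∑ i ∈ T \ S, phi q (z i) :=
          Finset.card_nsmul_le_sum _ _ _ (fun i hi => Finset.inf'_le _ hi)

lemma num_le {q : ℝ} (hq : 0 ≤ q) (z : Fin N → ℝ) {S T : Finset (Fin N)}
    (hcard : S.card ≤ T.card) (hsep : ∀ i ∈ T, ∀ j ∉ T, |z j| ≤ |z i|) :
    ∑ i ∈ S, phi q (z i) ≤ ∑ i ∈ T, phi q (z i) := by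
  have h1 := sum_split (fun i => phi q (z i)) S T
  have h2 := sum_split (fun i => phi q (z i)) T S
  have h3 := sum_sdiff_le hq z hcard hsep
  rw [Finset.inter_comm T S] at h2
  linarith

lemma den_le {q : ℝ} (hq : 0 ≤ q) (z : Fin N → ℝ) {S T : Finset (Fin N)}
    (hcard : S.card ≤ T.card) (hsep : ∀ i ∈ T, ∀ j ∉ T, |z j| ≤ |z i|) :
    ∑ i ∈ Tᶜ, phi q (z i) ≤ ∑ i ∈ Sᶜ, phi q (z i) := by
  have h1 := sum_split (fun i => phi q (z i)) Sᶜ Tᶜ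
  have h2 := sum_split (fun i => phi q (z i)) Tᶜ Sᶜ
  have h3 := sum_sdiff_le hq z hcard hsep
  have e1 : Sᶜ \ Tᶜ = T \ S := compl_sdiff_compl
  have e2 : Tᶜ \ Sᶜ = S \ T := compl_sdiff_compl
  have e3 : Sᶜ ∩ Tᶜ = Tᶜ ∩ Sᶜ := Finset.inter_comm _ _
  rw [e1, e3] at h1
  rw [e2] at h2
  linarith

lemma exists_topk (z : Fin N → ℝ) (hkN : k ≤ N) :
    ∃ T : Finset (Fin N), T.card = k ∧ ∀ i ∈ T, ∀ j ∉ T, |z j| ≤ |z i| := by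
  have hne : (Finset.powersetCard k (Finset.univ : Finset (Fin N))).Nonempty := by
    rw [Finset.powersetCard_nonempty]
    simpa using hkN
  obtain ⟨T, hT, hmax⟩ := Finset.exists_max_image _ (fun T => ∑ i ∈ T, |z i|) hne
  have hTcard : T.card = k := (Finset.mem_powersetCard.1 hT).2
  refine ⟨T, hTcard, fun i hi j hj => ?_⟩
  by_contra hlt
  push_neg at hlt
  have hji : j ∉ T.erase i := fun hmem => hj (Finset.mem_of_mem_erase hmem)
  have hT' : insert j (T.erase i) ∈ Finset.powersetCard k Finset.univ := by
    rw [Finset.mem_powersetCard]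
    refine ⟨Finset.subset_univ _, ?_⟩
    rw [Finset.card_insert_of_notMem hji, Finset.card_erase_of_mem hi, hTcard]
    have : 1 ≤ k := by
      rw [← hTcard]
      exact Finset.card_pos.2 ⟨i, hi⟩
    omega
  have hsum : ∑ x ∈ T, |z x| < ∑ x ∈ insert j (T.erase i), |z x| := by
    rw [Finset.sum_insert hji]
    have := Finset.add_sum_erase T (fun x => |z x|) hi
    linarith
  exact absurd (hmax _ hT') (not_le.2 hsum)

lemma theta_le_top {q : ℝ} (hspark : sparkEq A (L + 1)) (hk : k ≤ L) (hq : 0 ≤ q)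
    {z : Fin N → ℝ} (hz : A.mulVec z = 0) (hz0 : z ≠ 0) {S T : Finset (Fin N)}
    (hS : S.card ≤ k) (hT : T.card = k) (hsep : ∀ i ∈ T, ∀ j ∉ T, |z j| ≤ |z i|) :
    theta q z S ≤ theta q z T := by
  have hcard : S.card ≤ T.card := by omega
  refine div_le_div₀ (Finset.sum_nonneg fun i _ => phi_nonneg q (z i))
    (num_le hq z hcard hsep) (den_pos hspark hk q hz hz0 (le_of_eq hT))
    (den_le hq z hcard hsep)

lemma theta_exp_mono (hspark : sparkEq A (L + 1)) (hk : k ≤ L) {q p' : ℝ}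
    (hq : 0 < q) (hqp : q ≤ p') {z : Fin N → ℝ} (hz : A.mulVec z = 0) (hz0 : z ≠ 0)
    {T : Finset (Fin N)} (hT : T.card = k) (hsep : ∀ i ∈ T, ∀ j ∉ T, |z j| ≤ |z i|) :
    theta q z T ≤ theta p' z T := by
  have hp' : 0 < p' := hq.trans_le hqp
  by_cases hTz : ∃ i ∈ T, z i ≠ 0
  · -- rescale by min nonzero entry of T
    set T' := T.filter (fun i => z i ≠ 0) with hT'
    have hT'ne : T'.Nonempty := by
      obtain ⟨i, hi, hzi⟩ := hTz
      exact ⟨i, Finset.mem_filter.2 ⟨hi, hzi⟩⟩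
    set c := T'.inf' hT'ne (fun i => |z i|) with hc
    have hcpos : 0 < c := by
      obtain ⟨i0, hi0, he⟩ := Finset.exists_mem_eq_inf' hT'ne (fun i => |z i|)
      rw [hc, he]
      exact abs_pos.2 (Finset.mem_filter.1 hi0).2
    set w : Fin N → ℝ := c⁻¹ • z with hw
    have hcinv : (c : ℝ)⁻¹ ≠ 0 := inv_ne_zero hcpos.ne'
    have hwz : A.mulVec w = 0 := by
      rw [hw, Matrix.mulVec_smul, hz, smul_zero]
    have hw0 : w ≠ 0 := smul_ne_zero hcinv hz0
    have habs : ∀ i, |w i| = c⁻¹ * |z i| := by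
      intro i
      rw [hw]
      simp [abs_mul, abs_of_pos (inv_pos.2 hcpos)]
    have e1 : theta q z T = theta q w T := (theta_smul hq.ne' hcinv z T).symm
    have e2 : theta p' z T = theta p' w T := (theta_smul hp'.ne' hcinv z T).symm
    rw [e1, e2]
    have hnum : ∑ i ∈ T, phi q (w i) ≤ ∑ i ∈ T, phi p' (w i) := by
      refine Finset.sum_le_sum fun i hi => ?_
      rcases eq_or_ne (z i) 0 with hzi | hzi
      · have : w i = 0 := by rw [hw]; simp [hzi]
        simp [phi, this]
      · have hwi : w i ≠ 0 := by
          rw [hw]; simpa [hzi] using (mul_ne_zero hcinv hzi)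
        have h1le : 1 ≤ |w i| := by
          rw [habs i, ← div_eq_inv_mul, le_div_iff₀ hcpos, one_mul]
          exact Finset.inf'_le _ (Finset.mem_filter.2 ⟨hi, hzi⟩)
        rw [phi_eq hq.ne', phi_eq hp'.ne']
        exact Real.rpow_le_rpow_of_exponent_le h1le hqp
    have hden : ∑ i ∈ Tᶜ, phi p' (w i) ≤ ∑ i ∈ Tᶜ, phi q (w i) := by
      refine Finset.sum_le_sum fun i hi => ?_
      rcases eq_or_ne (z i) 0 with hzi | hzi
      · have : w i = 0 := by rw [hw]; simp [hzi]
        simp [phi, this]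
      · have hwipos : 0 < |w i| := by
          rw [habs i]
          exact mul_pos (inv_pos.2 hcpos) (abs_pos.2 hzi)
        have hle1 : |w i| ≤ 1 := by
          rw [habs i, ← div_eq_inv_mul, div_le_iff₀ hcpos, one_mul]
          refine Finset.le_inf' hT'ne _ (fun j hj => ?_)
          exact hsep j (Finset.mem_filter.1 hj).1 i (Finset.mem_compl.1 hi)
        rw [phi_eq hq.ne', phi_eq hp'.ne']
        exact Real.rpow_le_rpow_of_exponent_ge hwipos hle1 hqp
    refine div_le_div₀ (Finset.sum_nonneg fun i _ => phi_nonneg p' (w i)) hnum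
      (den_pos hspark hk p' hwz hw0 (le_of_eq hT)) hden
  · -- numerator is zero
    push_neg at hTz
    have hnum0 : ∀ r : ℝ, ∑ i ∈ T, phi r (z i) = 0 := by
      intro r
      refine Finset.sum_eq_zero fun i hi => ?_
      simp [phi, hTz i hi]
    rw [theta, theta, hnum0, hnum0, zero_div, zero_div]

lemma kN_le (hspark : sparkEq A (L + 1)) (hk : k ≤ L) : k ≤ N := by
  obtain ⟨z0, _, _, hcard⟩ := hspark.1
  have := Finset.card_le_univ (supp z0)
  simp only [Finset.card_univ, Fintype.card_fin] at this
  omega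

lemma phi_continuous {q : ℝ} (hq : 0 < q) : Continuous (phi q) := by
  have h : phi q = fun x => |x| ^ q := funext (phi_eq hq.ne')
  rw [h]
  refine continuous_iff_continuousAt.2 fun x => ?_
  exact (Real.continuousAt_rpow_const _ _ (Or.inr hq.le)).comp continuous_abs.continuousAt

lemma valid_nonempty (hspark : sparkEq A (L + 1)) (hk : k ≤ L) {q : ℝ} (hq : 0 < q) :
    (validNSC A q k).Nonempty := by
  classical
  obtain ⟨z0, hz0ker, hz0ne, _⟩ := hspark.1
  set K : Set (Fin N → ℝ) := {z | A.mulVec z = 0 ∧ ‖z‖ = 1} with hK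
  have hmulcont : Continuous (fun z : Fin N → ℝ => A.mulVec z) := by
    have := LinearMap.continuous_of_finiteDimensional (Matrix.mulVecLin A)
    exact this
  have hclosed : IsClosed K :=
    (isClosed_eq hmulcont continuous_const).inter (isClosed_eq continuous_norm continuous_const)
  have hbdd : Bornology.IsBounded K := by
    refine (Metric.isBounded_closedBall (x := (0 : Fin N → ℝ)) (r := 1)).subset fun z hz => ?_
    rw [Metric.mem_closedBall, dist_zero_right]
    exact le_of_eq hz.2
  have hKcomp : IsCompact K := Metric.isCompact_of_isClosed_isBounded hclosed hbdd
  have hKz : ∀ z ∈ K, z ≠ 0 := by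
    intro z hz h0
    rw [h0] at hz
    simpa using hz.2
  have hcontOn : ∀ S : Finset (Fin N), S.card ≤ k →
      ContinuousOn (fun z : Fin N → ℝ => theta q z S) K := by
    intro S hS
    have hnum : Continuous fun z : Fin N → ℝ => ∑ i ∈ S, phi q (z i) :=
      continuous_finset_sum _ (fun i _ => (phi_continuous hq).comp (continuous_apply i))
    have hden : Continuous fun z : Fin N → ℝ => ∑ i ∈ Sᶜ, phi q (z i) :=
      continuous_finset_sum _ (fun i _ => (phi_continuous hq).comp (continuous_apply i))
    refine ContinuousOn.div hnum.continuousOn hden.continuousOn fun z hz => ?_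
    exact (den_pos hspark hk q hz.1 (hKz z hz) hS).ne'
  set 𝒮 : Finset (Finset (Fin N)) := Finset.univ.filter (fun S => S.card ≤ k) with h𝒮
  have h𝒮ne : 𝒮.Nonempty := ⟨∅, by simp [h𝒮]⟩
  set m : Finset (Fin N) → ℝ := fun S => sSup ((fun z => theta q z S) '' K) with hm
  set γ0 : ℝ := 𝒮.sup' h𝒮ne m with hγ0
  refine ⟨γ0, ?_⟩
  intro S hS z hz
  rcases eq_or_ne z 0 with rfl | hz0
  · simp [phi]
  · have hnz : ‖z‖ ≠ 0 := norm_ne_zero_iff.2 hz0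
    set w : Fin N → ℝ := ‖z‖⁻¹ • z with hwdef
    have hwK : w ∈ K := by
      constructor
      · rw [hwdef, Matrix.mulVec_smul, hz, smul_zero]
      · rw [hwdef, norm_smul]
        simp [abs_of_nonneg (norm_nonneg z), inv_mul_cancel₀ hnz]
    have h1 : theta q z S = theta q w S := (theta_smul hq.ne' (inv_ne_zero hnz) z S).symm
    have h2 : theta q w S ≤ m S :=
      le_csSup (hKcomp.bddAbove_image (hcontOn S hS)) ⟨w, hwK, rfl⟩
    have h3 : m S ≤ γ0 := Finset.le_sup' m (by simp [h𝒮, hS])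
    have : theta q z S ≤ γ0 := by rw [h1]; exact h2.trans h3
    rwa [theta, div_le_iff₀ (den_pos hspark hk q hz hz0 hS)] at this

lemma valid_bddBelow (hspark : sparkEq A (L + 1)) (hk : k ≤ L) (q : ℝ) :
    BddBelow (validNSC A q k) := by
  obtain ⟨z0, hz0ker, hz0ne, _⟩ := hspark.1
  refine ⟨0, fun γ hγ => ?_⟩
  have h := hγ ∅ (by simp) z0 hz0ker
  simp only [Finset.sum_empty] at h
  have hd : 0 < ∑ i ∈ (∅ : Finset (Fin N))ᶜ, phi q (z0 i) :=
    den_pos hspark hk q hz0ker hz0ne (by simp)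
  by_contra hneg
  push_neg at hneg
  nlinarith

lemma valid_closed (q : ℝ) : IsClosed (validNSC A q k) := by
  have : validNSC A q k =
      ⋂ (S : Finset (Fin N)) (_ : S.card ≤ k) (z : Fin N → ℝ) (_ : A.mulVec z = 0),
        {γ : ℝ | ∑ i ∈ S, phi q (z i) ≤ γ * ∑ i ∈ Sᶜ, phi q (z i)} := by
    ext γ
    simp only [validNSC, Set.mem_setOf_eq, Set.mem_iInter]
  rw [this]
  exact isClosed_iInter fun S => isClosed_iInter fun _ => isClosed_iInter fun z =>
    isClosed_iInter fun _ =>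
      isClosed_le continuous_const (continuous_id.mul continuous_const)

lemma gamma_mem (hspark : sparkEq A (L + 1)) (hk : k ≤ L) {q : ℝ} (hq : 0 < q) :
    gammaNSC A q k ∈ validNSC A q k := by
  rw [gammaNSC]
  exact IsClosed.csInf_mem (valid_closed q) (valid_nonempty hspark hk hq)
    (valid_bddBelow hspark hk q)

lemma gamma_mono (hspark : sparkEq A (L + 1)) (hk : k ≤ L) {q p' : ℝ}
    (hq : 0 < q) (hqp : q ≤ p') : gammaNSC A q k ≤ gammaNSC A p' k := by
  have hp' : 0 < p' := hq.trans_le hqp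
  refine csInf_le (valid_bddBelow hspark hk q) ?_
  intro S hS z hz
  rcases eq_or_ne z 0 with rfl | hz0
  · simp [phi]
  obtain ⟨T, hTcard, hsep⟩ := exists_topk z (kN_le hspark hk)
  have h1 : theta q z S ≤ theta q z T := theta_le_top hspark hk hq.le hz hz0 hS hTcard hsep
  have h2 : theta q z T ≤ theta p' z T := theta_exp_mono hspark hk hq hqp hz hz0 hTcard hsep
  have h3 : theta p' z T ≤ gammaNSC A p' k :=
    theta_le_of_valid hspark hk (gamma_mem hspark hk hp') hz hz0 (le_of_eq hTcard)
  have : theta q z S ≤ gammaNSC A p' k := (h1.trans h2).trans h3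
  rwa [theta, div_le_iff₀ (den_pos hspark hk q hz hz0 hS)] at this

lemma exists_near (hspark : sparkEq A (L + 1)) (hk : k ≤ L) {p' : ℝ} (hp' : 0 < p')
    {ε : ℝ} (hε : 0 < ε) :
    ∃ z : Fin N → ℝ, ∃ S : Finset (Fin N), A.mulVec z = 0 ∧ z ≠ 0 ∧ S.card ≤ k ∧
      gammaNSC A p' k - ε < theta p' z S := by
  by_contra hcon
  push_neg at hcon
  have hmem : gammaNSC A p' k - ε ∈ validNSC A p' k := by
    intro S hS z hz
    rcases eq_or_ne z 0 with rfl | hz0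
    · simp [phi]
    have h := hcon z S hz hz0 hS
    rwa [theta, div_le_iff₀ (den_pos hspark hk p' hz hz0 hS)] at h
  have h2 : gammaNSC A p' k ≤ gammaNSC A p' k - ε :=
    csInf_le (valid_bddBelow hspark hk p') hmem
  linarith

end main

/-- left-continuity of p ↦ γ(ℓ_p,A,k) at every p ∈ (0,1]. -/
theorem stmt6 {M N L : ℕ} (A : Matrix (Fin M) (Fin N) ℝ) (hspark : sparkEq A (L + 1))
    (k : ℕ) (hk : k ≤ L) (p : ℝ) (hp : p ∈ Set.Ioc (0 : ℝ) 1) :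
    Tendsto (fun q => gammaNSC A q k) (nhdsWithin p (Set.Ico 0 p))
      (nhds (gammaNSC A p k)) := by
  have hp0 : 0 < p := hp.1
  rw [tendsto_order]
  constructor
  · intro a ha
    have hε : 0 < gammaNSC A p k - a := by linarith
    obtain ⟨z, S, hz, hz0, hS, hθ⟩ := exists_near hspark hk hp0 hε
    have hθ' : a < theta p z S := by linarith
    have hterm : ∀ i : Fin N, Continuous (fun q : ℝ => phi q (z i)) := by
      intro i
      rcases eq_or_ne (z i) 0 with h | h
      · simpa [phi, h] using continuous_const
      · have : (fun q : ℝ => phi q (z i)) = fun q => Real.exp (Real.log |z i| * q) := by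
          funext q
          rw [phi, if_neg h, Real.rpow_def_of_pos (abs_pos.2 h)]
        rw [this]
        exact Real.continuous_exp.comp (continuous_const.mul continuous_id)
    have hnum : Continuous fun q : ℝ => ∑ i ∈ S, phi q (z i) :=
      continuous_finset_sum _ (fun i _ => hterm i)
    have hden : Continuous fun q : ℝ => ∑ i ∈ Sᶜ, phi q (z i) :=
      continuous_finset_sum _ (fun i _ => hterm i)
    have hcont : ContinuousAt (fun q : ℝ => theta q z S) p := by
      simp only [theta]
      exact hnum.continuousAt.div hden.continuousAt
        (den_pos hspark hk p hz hz0 hS).ne'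
    have hev1 : ∀ᶠ q in nhds p, a < theta q z S :=
      hcont.eventually (eventually_gt_nhds hθ')
    have hev2 : ∀ᶠ q in nhds p, 0 < q := eventually_gt_nhds hp0
    have hev := ((hev1.and hev2).filter_mono (nhdsWithin_le_nhds
      (s := Set.Ico 0 p)))
    filter_upwards [hev] with q hq
    refine lt_of_lt_of_le hq.1 ?_
    rw [gammaNSC]
    exact le_csInf (valid_nonempty hspark hk hq.2)
      (fun γ hγ => theta_le_of_valid hspark hk hγ hz hz0 hS)
  · intro a ha
    have hev2 : ∀ᶠ q in nhdsWithin p (Set.Ico 0 p), 0 < q :=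
      (eventually_gt_nhds hp0).filter_mono (nhdsWithin_le_nhds (s := Set.Ico 0 p))
    have hev3 : ∀ᶠ q in nhdsWithin p (Set.Ico 0 p), q ∈ Set.Ico 0 p :=
      eventually_mem_nhdsWithin
    filter_upwards [hev2, hev3] with q h2 h3
    exact lt_of_le_of_lt (gamma_mono hspark hk h2 h3.2.le) ha
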